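/- Let R be a principal ideal domain with fraction field K and let M be a finitely generated R-module. Suppose there exists r ∈ ℕ such that for every prime ideal p ⊆ R (including p = 0) the κ(p)-vector space Tor_0^R(κ(p), M) ⊕ Tor_1^R(κ(p), M) satisfies dim_{κ(p)} Tor_0^R(κ(p), M) = r and Tor_1^R(κ(p), M) = 0. Then M is free of rank r. -/

import Mathlib

open CategoryTheory TensorProduct

universe u

/-- The `A`-linear version of `TensorProduct.prodRight`. -/
noncomputable def prodRightAlg (R A M N : Type u) [CommRing R] [CommRing A] [Algebra R A]
    [AddCommGroup M] [Module R M] [AddCommGroup N] [Module R N] :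
    A ⊗[R] (M × N) ≃ₗ[A] (A ⊗[R] M) × (A ⊗[R] N) :=
  (TensorProduct.prodRight R A A M N).toAddEquiv.toLinearEquiv <| by
    intro a x
    show (TensorProduct.prodRight R A A M N) (a • x) = a • (TensorProduct.prodRight R A A M N) x
    induction x using TensorProduct.induction_on with
    | zero => simp
    | tmul b mn =>
      obtain ⟨m, n⟩ := mn
      simp [TensorProduct.smul_tmul', Prod.smul_mk]
    | add x y hx hy =>
      simp only [smul_add, map_add] at hx hy ⊢
      rw [hx, hy]

/-- A tensor product of a torsion module with a field containing `R` vanishes. -/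
theorem subsingleton_tensor_of_torsion (R L D : Type u) [CommRing R] [Field L] [Algebra R L]
    [AddCommGroup D] [Module R D]
    (hinj : Function.Injective (algebraMap R L))
    (htors : ∀ d : D, ∃ c : R, c ≠ 0 ∧ c • d = 0) : Subsingleton (L ⊗[R] D) := by
  refine subsingleton_of_forall_eq 0 fun x => ?_
  induction x using TensorProduct.induction_on with
  | zero => rfl
  | tmul a d =>
    obtain ⟨c, hc0, hcd⟩ := htors d
    have h1 : algebraMap R L c ≠ 0 := fun hc => hc0 (hinj (by simpa using hc))
    have h2 : (algebraMap R L c) • (a ⊗ₜ[R] d) = 0 := by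
      rw [algebraMap_smul, TensorProduct.smul_tmul', TensorProduct.smul_tmul, hcd,
        TensorProduct.tmul_zero]
    calc a ⊗ₜ[R] d = (algebraMap R L c)⁻¹ • ((algebraMap R L c) • (a ⊗ₜ[R] d)) :=
          (inv_smul_smul₀ h1 _).symm
      _ = 0 := by rw [h2, smul_zero]
  | add x y hx hy => rw [hx, hy, add_zero]

/-- If the ideal `I` maps to zero in `L`, then `L ⊗ R/I` is nontrivial. -/
theorem nontrivial_tensor_quot (R L : Type u) [CommRing R] [Field L] [Algebra R L]
    (I : Submodule R R) (hI : ∀ a ∈ I, algebraMap R L a = 0) :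
    Nontrivial (L ⊗[R] (R ⧸ I)) := by
  let f : (R ⧸ I) →ₗ[R] L :=
    Submodule.liftQ I (Algebra.linearMap R L) (fun a ha => by simpa using hI a ha)
  let B : L →ₗ[R] (R ⧸ I) →ₗ[R] L :=
    LinearMap.mk₂ R (fun a x => f x * a)
      (fun a b x => by simp [mul_add])
      (fun r a x => by simp [mul_smul_comm])
      (fun a x y => by simp [add_mul])
      (fun r a x => by simp [smul_mul_assoc])
  let g : L ⊗[R] (R ⧸ I) →ₗ[R] L := TensorProduct.lift B
  refine ⟨(1 : L) ⊗ₜ[R] (Submodule.Quotient.mk 1), 0, fun hc => ?_⟩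
  have h1 : g ((1 : L) ⊗ₜ[R] (Submodule.Quotient.mk 1)) = 1 := by
    rw [TensorProduct.lift.tmul]
    show f (Submodule.Quotient.mk 1) * 1 = 1
    rw [Submodule.liftQ_apply]
    simp
  rw [hc, map_zero] at h1
  exact zero_ne_one h1

/-- The dimension count over a residue field. -/
theorem finrank_tensor_count (R L : Type u) [CommRing R] [Nontrivial R] [Field L] [Algebra R L]
    (M : Type u) [AddCommGroup M] [Module R M] (n : ℕ) (D : Type u) [AddCommGroup D]
    [Module R D] [Module.Finite R D] (eqv : M ≃ₗ[R] (Fin n →₀ R) × D) :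
    Module.finrank L (L ⊗[R] M) = n + Module.finrank L (L ⊗[R] D) := by
  have eB : L ⊗[R] M ≃ₗ[L] L ⊗[R] ((Fin n →₀ R) × D) :=
    LinearEquiv.baseChange R L M _ eqv
  have eP : L ⊗[R] ((Fin n →₀ R) × D) ≃ₗ[L] (L ⊗[R] (Fin n →₀ R)) × (L ⊗[R] D) :=
    prodRightAlg R L (Fin n →₀ R) D
  have h1 : Module.finrank L (L ⊗[R] M) = Module.finrank L (L ⊗[R] ((Fin n →₀ R) × D)) :=
    LinearEquiv.finrank_eq eB
  have h2 : Module.finrank L (L ⊗[R] ((Fin n →₀ R) × D)) =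
      Module.finrank L ((L ⊗[R] (Fin n →₀ R)) × (L ⊗[R] D)) :=
    LinearEquiv.finrank_eq eP
  rw [h1, h2, Module.finrank_prod, Module.finrank_baseChange,
    Module.finrank_finsupp_self, Fintype.card_fin]

set_option maxHeartbeats 1600000 in
set_option synthInstance.maxHeartbeats 1000000 in
/-- Let `R` be a PID with fraction field `K` and `M` a finitely generated `R`-module.
Suppose there is `r : ℕ` such that for every prime ideal `p ⊆ R` (including `p = 0`),
with residue field `κ(p) = Frac(R/p)`, one has `dim_{κ(p)} (κ(p) ⊗[R] M) = r`
(this tensor product is `Tor_0^R(κ(p), M)`) and `Tor_1^R(κ(p), M) = 0`.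
Then `M` is free of rank `r`. -/
theorem stmt_15 (R : Type u) [CommRing R] [IsDomain R] [IsPrincipalIdealRing R]
    (M : Type u) [AddCommGroup M] [Module R M] [Module.Finite R M] (r : ℕ)
    (h : ∀ (p : Ideal R) (_ : p.IsPrime),
      Module.finrank (FractionRing (R ⧸ p)) (FractionRing (R ⧸ p) ⊗[R] M) = r ∧
      Subsingleton (((Tor (ModuleCat.{u} R) 1).obj
        (ModuleCat.of R (FractionRing (R ⧸ p)))).obj (ModuleCat.of R M))) :
    Module.Free R M ∧ Module.finrank R M = r := by
  classical
  obtain ⟨n, ι, hι, p, hirr, e, ⟨eqv⟩⟩ :=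
    Module.equiv_free_prod_directSum (R := R) (M := M)
  haveI : Module.Finite R (DirectSum ι fun i => R ⧸ Submodule.span R {p i ^ e i}) :=
    Module.Finite.of_surjective
      ((LinearMap.snd R (Fin n →₀ R) (DirectSum ι fun i => R ⧸ Submodule.span R {p i ^ e i}))
        ∘ₗ eqv.toLinearMap)
      (Prod.snd_surjective.comp eqv.surjective)
  -- the direct sum is a torsion module
  have htors : ∀ d : DirectSum ι fun i => R ⧸ Submodule.span R {p i ^ e i},
      ∃ c : R, c ≠ 0 ∧ c • d = 0 := by
    intro d
    refine ⟨∏ i, p i ^ e i, ?_, ?_⟩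
    · exact Finset.prod_ne_zero_iff.mpr fun i _ => pow_ne_zero _ (hirr i).ne_zero
    · refine DFinsupp.ext fun i => ?_
      obtain ⟨x, hx⟩ := Submodule.Quotient.mk_surjective _ (d i)
      have hz : (∏ j, p j ^ e j) • (d i) = 0 := by
        rw [← hx, ← Submodule.Quotient.mk_smul, Submodule.Quotient.mk_eq_zero,
          Ideal.submodule_span_eq, Ideal.mem_span_singleton, smul_eq_mul]
        exact Dvd.dvd.mul_right (Finset.dvd_prod_of_mem _ (Finset.mem_univ i)) x
      rw [DirectSum.smul_apply]
      simpa using hz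
  -- compute `r = n` using the zero ideal
  haveI : (⊥ : Ideal R).IsPrime := Ideal.bot_prime
  have hbot := (h ⊥ inferInstance).1
  have hinj0 : Function.Injective (algebraMap R (FractionRing (R ⧸ (⊥ : Ideal R)))) := by
    have h1 : Function.Injective (algebraMap R (R ⧸ (⊥ : Ideal R))) := by
      rw [Ideal.Quotient.algebraMap_eq, RingHom.injective_iff_ker_eq_bot]
      exact Ideal.mk_ker
    have h2 := IsFractionRing.injective (R ⧸ (⊥ : Ideal R)) (FractionRing (R ⧸ (⊥ : Ideal R)))
    rw [IsScalarTower.algebraMap_eq R (R ⧸ (⊥ : Ideal R)) (FractionRing (R ⧸ (⊥ : Ideal R))),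
      RingHom.coe_comp]
    exact h2.comp h1
  haveI hsub0 : Subsingleton ((FractionRing (R ⧸ (⊥ : Ideal R))) ⊗[R]
      (DirectSum ι fun i => R ⧸ Submodule.span R {p i ^ e i})) :=
    subsingleton_tensor_of_torsion R _ _ hinj0 htors
  have hrn : r = n := by
    rw [← hbot, finrank_tensor_count R (FractionRing (R ⧸ (⊥ : Ideal R))) M n _ eqv,
      Module.finrank_zero_of_subsingleton, add_zero]
  rcases subsingleton_or_nontrivial (DirectSum ι fun i => R ⧸ Submodule.span R {p i ^ e i})
    with hDs | hDn
  · -- no torsion : M is free of rank n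
    refine ⟨Module.Free.of_equiv eqv.symm, ?_⟩
    have hD0 : Module.finrank R (DirectSum ι fun i => R ⧸ Submodule.span R {p i ^ e i}) = 0 :=
      Module.finrank_zero_of_subsingleton
    rw [LinearEquiv.finrank_eq eqv, Module.finrank_prod, hD0, Module.finrank_finsupp_self,
      Fintype.card_fin, add_zero, hrn]
  · -- torsion present : contradiction
    exfalso
    obtain ⟨d, hd⟩ := exists_ne (0 : DirectSum ι fun i => R ⧸ Submodule.span R {p i ^ e i})
    have hex : ∃ i, d i ≠ 0 := by
      by_contra hc
      push_neg at hc
      exact hd (DFinsupp.ext fun i => hc i)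
    obtain ⟨i, hi⟩ := hex
    haveI hnt : Nontrivial (R ⧸ Submodule.span R {p i ^ e i}) := ⟨d i, 0, hi⟩
    have hei : e i ≠ 0 := by
      intro h0
      apply hi
      have htop : Submodule.span R {p i ^ e i} = ⊤ := by
        rw [h0, pow_zero, Ideal.submodule_span_eq, Ideal.span_singleton_one]
      haveI := Submodule.Quotient.subsingleton_iff.mpr htop
      exact Subsingleton.elim _ _
    haveI hPmax : Ideal.IsMaximal (Submodule.span R {p i}) :=
      PrincipalIdealRing.isMaximal_of_irreducible (hirr i)
    haveI hPprime : Ideal.IsPrime (Submodule.span R {p i}) := Ideal.IsMaximal.isPrime hPmax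
    have hpz : algebraMap R (FractionRing (R ⧸ (Submodule.span R {p i} : Ideal R))) (p i) = 0 := by
      rw [IsScalarTower.algebraMap_apply R (R ⧸ (Submodule.span R {p i} : Ideal R))
        (FractionRing (R ⧸ (Submodule.span R {p i} : Ideal R))), Ideal.Quotient.algebraMap_eq,
        Ideal.Quotient.eq_zero_iff_mem.mpr (Submodule.mem_span_singleton_self _), map_zero]
    have hIz : ∀ a ∈ Submodule.span R {p i ^ e i},
        algebraMap R (FractionRing (R ⧸ (Submodule.span R {p i} : Ideal R))) a = 0 := by
      intro a ha
      rw [Ideal.submodule_span_eq, Ideal.mem_span_singleton] at ha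
      obtain ⟨b, rfl⟩ := ha
      rw [map_mul, map_pow, hpz, zero_pow hei, zero_mul]
    haveI hntq : Nontrivial ((FractionRing (R ⧸ (Submodule.span R {p i} : Ideal R))) ⊗[R]
        (R ⧸ Submodule.span R {p i ^ e i})) :=
      nontrivial_tensor_quot R (FractionRing (R ⧸ (Submodule.span R {p i} : Ideal R)))
        (Submodule.span R {p i ^ e i}) hIz
    haveI hntD : Nontrivial ((FractionRing (R ⧸ (Submodule.span R {p i} : Ideal R))) ⊗[R]
        (DirectSum ι fun j => R ⧸ Submodule.span R {p j ^ e j})) := by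
      have hcomp : Function.Surjective
          (DirectSum.component R ι (fun j => R ⧸ Submodule.span R {p j ^ e j}) i) :=
        fun x => ⟨DirectSum.lof R ι (fun j => R ⧸ Submodule.span R {p j ^ e j}) i x,
          DirectSum.component.lof_self (M := fun j => R ⧸ Submodule.span R {p j ^ e j}) R i x⟩
      exact (LinearMap.lTensor_surjective
        (FractionRing (R ⧸ (Submodule.span R {p i} : Ideal R))) hcomp).nontrivial
    have hpos : 0 < Module.finrank (FractionRing (R ⧸ (Submodule.span R {p i} : Ideal R)))
        ((FractionRing (R ⧸ (Submodule.span R {p i} : Ideal R))) ⊗[R]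
          (DirectSum ι fun j => R ⧸ Submodule.span R {p j ^ e j})) :=
      Module.finrank_pos
    have hP1 := (h (Submodule.span R {p i}) hPprime).1
    rw [finrank_tensor_count R (FractionRing (R ⧸ (Submodule.span R {p i} : Ideal R))) M n _ eqv]
      at hP1
    omega
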